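/- arXiv:1009.4209 — 2 statements merged into one kernel-verified Lean document; each statement's English description precedes it below -/
import Mathlib

section
/- Every solution (X,Y,Z,W) in non-negative integers of the equation -X + Y - bZ + W = 0 (where b is a positive integer) can be written as a linear combination with non-negative integer coefficients of the vectors (1,1,0,0), (1,0,0,1), and (0,b-k,1,k) for 0 ≤ k ≤ b. -/
lemma sum_shift (b k : ℕ) (hk : k ≤ b) (c : ℕ → ℕ) (f : ℕ → ℕ) :
    ∑ j ∈ Finset.range (b+1), (c j + if j = k then 1 else 0) * f j
      = (∑ j ∈ Finset.range (b+1), c j * f j) + f k := by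
  simp [add_mul, Finset.sum_add_distrib, ite_mul, Finset.sum_ite_eq', Nat.lt_succ_iff, hk]

lemma aux_gen (b : ℕ) (hb : 0 < b) (Z : ℕ) : ∀ X Y W : ℕ, X + b * Z = Y + W →
    ∃ (c₁ c₂ : ℕ) (c : ℕ → ℕ),
      X = c₁ * 1 + c₂ * 1 + ∑ k ∈ Finset.range (b + 1), c k * 0 ∧
      Y = c₁ * 1 + c₂ * 0 + ∑ k ∈ Finset.range (b + 1), c k * (b - k) ∧
      Z = c₁ * 0 + c₂ * 0 + ∑ k ∈ Finset.range (b + 1), c k * 1 ∧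
      W = c₁ * 0 + c₂ * 1 + ∑ k ∈ Finset.range (b + 1), c k * k := by
  induction Z with
  | zero =>
    intro X Y W h
    exact ⟨Y, W, fun _ => 0, by simpa using by omega, by simp, by simp, by simp⟩
  | succ Z ih =>
    intro X Y W h
    rw [Nat.mul_succ] at h
    set k := min W b with hk
    have hkb : k ≤ b := by omega
    have hkW : k ≤ W := by omega
    have hYk : b - k ≤ Y := by omega
    obtain ⟨c₁, c₂, c, h1, h2, h3, h4⟩ := ih X (Y - (b - k)) (W - k) (by omega)
    refine ⟨c₁, c₂, fun j => c j + if j = k then 1 else 0, ?_, ?_, ?_, ?_⟩ <;>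
      rw [sum_shift b k hkb] <;> omega

/-- Every non-negative integer solution of -X + Y - bZ + W = 0 is a non-negative
integer combination of (1,1,0,0), (1,0,0,1) and (0,b-k,1,k) for 0 ≤ k ≤ b. -/
theorem solutions_generated (b : ℕ) (hb : 0 < b) (X Y Z W : ℕ)
    (h : -(X : ℤ) + (Y : ℤ) - (b : ℤ) * (Z : ℤ) + (W : ℤ) = 0) :
    ∃ (c₁ c₂ : ℕ) (c : ℕ → ℕ),
      X = c₁ * 1 + c₂ * 1 + ∑ k ∈ Finset.range (b + 1), c k * 0 ∧
      Y = c₁ * 1 + c₂ * 0 + ∑ k ∈ Finset.range (b + 1), c k * (b - k) ∧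
      Z = c₁ * 0 + c₂ * 0 + ∑ k ∈ Finset.range (b + 1), c k * 1 ∧
      W = c₁ * 0 + c₂ * 1 + ∑ k ∈ Finset.range (b + 1), c k * k := by
  apply aux_gen b hb Z X Y W
  have : (X : ℤ) + (b * Z : ℕ) = (Y : ℤ) + W := by push_cast; linarith
  exact_mod_cast this
end

section
/- The derivation δ with δ(a₁) = b a₂^{b-1}a₃, δ(a₂) = a₄, δ(a₃) = δ(a₄) = 0 satisfies δ²(x_{b-1}) = 0 and δ(x_b) = 0, where x_j = a₂^{b-j}a₃a₄^j. -/
open MvPolynomial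

/-- The derivation δ with δ(a₁) = b a₂^{b-1} a₃, δ(a₂) = a₄, δ(a₃) = δ(a₄) = 0. -/
noncomputable def deltaDer (b : ℕ) :
    Derivation ℂ (MvPolynomial (Fin 4) ℂ) (MvPolynomial (Fin 4) ℂ) :=
  MvPolynomial.mkDerivation ℂ
    ![(b : MvPolynomial (Fin 4) ℂ) * X 1 ^ (b - 1) * X 2, X 3, 0, 0]

/-- x_k = a₂^{b-k} a₃ a₄^k. -/
noncomputable def xMon (b k : ℕ) : MvPolynomial (Fin 4) ℂ :=
  X 1 ^ (b - k) * X 2 * X 3 ^ k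

theorem deltaDer_sq_x (b : ℕ) (hb : 1 ≤ b) :
    deltaDer b (deltaDer b (xMon b (b - 1))) = 0 ∧ deltaDer b (xMon b b) = 0 := by
  have h1 : b - (b - 1) = 1 := by omega
  have hX1 : deltaDer b (X 1) = X 3 := by
    simp [deltaDer, mkDerivation_X]
  have hX3 : deltaDer b (X 3) = 0 := by
    simp [deltaDer, mkDerivation_X]
  have hX2 : deltaDer b (X 2) = 0 := by
    simp [deltaDer, mkDerivation_X]
  constructor
  · simp [xMon, h1, Derivation.leibniz, Derivation.leibniz_pow, hX1, hX2, hX3]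
  · simp [xMon, Derivation.leibniz, Derivation.leibniz_pow, hX2, hX3]
end
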